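/- Suppose P(R = 0) > 0 and 0 < P(R = 1 | X, D) < 1 almost surely, and let π_R(X, D) := P(R = 1 | X, D) / P(R = 0 | X, D) be the true response odds. Then, under Assumption 2 (MAR) and Assumption 3 (overlap), for every η ∈ ℝ and every measurable function m : ℝ × ℝ^k × {0,1} → [0,1]: P(V_C < η | R = 0) = 1 − γ + E[ ψ_C(η; m, π_R) ] / P(R = 0), where ψ_C(η; m, π) := (1 − R)·(m(η, X, D) − (1 − γ)) + (R / π(X, D))·(1{V_C < η} − m(η, X, D)). -/

import Mathlib

open MeasureTheory ProbabilityTheory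
open scoped ENNReal

lemma pullout_aux {Ω : Type*} {mΩ : MeasurableSpace Ω} {m : MeasurableSpace Ω}
    (hm : m ≤ mΩ) (P : @MeasureTheory.Measure Ω mΩ) [IsProbabilityMeasure P]
    {φ h : Ω → ℝ} (hφ : StronglyMeasurable[m] φ) {c : ℝ}
    (hbd : ∀ᵐ ω ∂P, ‖φ ω‖ ≤ c) (hh : Integrable h P) :
    ∫ ω, φ ω * h ω ∂P = ∫ ω, φ ω * (P[h|m]) ω ∂P := by
  have hφm := StronglyMeasurable.aestronglyMeasurable (μ := P) (hφ.mono hm)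
  have h2 : Integrable (fun ω => φ ω * h ω) P := hh.bdd_mul hφm hbd
  have h1 : P[(fun ω => φ ω * h ω)|m] =ᵐ[P] fun ω => φ ω * (P[h|m]) ω :=
    condExp_stronglyMeasurable_mul_of_bound hm hφ hh c hbd
  rw [← integral_condExp hm (f := fun ω => φ ω * h ω)]
  exact integral_congr_ae h1

lemma aux_int_ind {Ω : Type*} {mΩ : MeasurableSpace Ω} (P : @MeasureTheory.Measure Ω mΩ)
    {f : Ω → ℝ} (hf : Integrable f P) {S : Set Ω}
    (hS : MeasurableSet S) : Integrable (S.indicator f) P := hf.indicator hS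

lemma aux_integral_ind {Ω : Type*} {mΩ : MeasurableSpace Ω} (P : @MeasureTheory.Measure Ω mΩ)
    (f : Ω → ℝ) {S : Set Ω} (hS : MeasurableSet S) :
    ∫ ω, S.indicator f ω ∂P = ∫ ω in S, f ω ∂P := integral_indicator hS

lemma aux_integral_ind_one {Ω : Type*} {mΩ : MeasurableSpace Ω} (P : @MeasureTheory.Measure Ω mΩ)
    [IsProbabilityMeasure P] {S : Set Ω} (hS : MeasurableSet S) :
    ∫ ω, S.indicator (fun _ => (1:ℝ)) ω ∂P = (P S).toReal := by
  rw [integral_indicator_const (1:ℝ) hS]; simp; rfl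

noncomputable def mapm {Ω : Type*} {mΩ : MeasurableSpace Ω} {β : Type*} [MeasurableSpace β]
    (P : @MeasureTheory.Measure Ω mΩ) (f : Ω → β) : MeasureTheory.Measure β :=
  @MeasureTheory.Measure.map Ω β mΩ _ f P

lemma mapm_apply {Ω : Type*} {mΩ : MeasurableSpace Ω} {β : Type*} [MeasurableSpace β]
    {P : @MeasureTheory.Measure Ω mΩ} {f : Ω → β} (hf : Measurable f) {s : Set β}
    (hs : MeasurableSet s) : mapm P f s = P (f ⁻¹' s) :=
  MeasureTheory.Measure.map_apply hf hs

lemma aux_bridge {Ω : Type*} {mΩ : MeasurableSpace Ω} (P : @MeasureTheory.Measure Ω mΩ)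
    [IsProbabilityMeasure P] (F : Ω → ℝ) (hFi : Integrable F P) (hFnn : 0 ≤ᵐ[P] F)
    {S : Set Ω} (hS : MeasurableSet S) :
    (P.withDensity fun ω => ENNReal.ofReal (F ω)) S
      = ENNReal.ofReal (∫ ω, S.indicator F ω ∂P) := by
  rw [withDensity_apply _ hS, integral_indicator hS,
    ofReal_integral_eq_lintegral_ofReal (hFi.restrict (s := S))
      (hFnn.filter_mono (ae_mono Measure.restrict_le_self))]

theorem stmt_5
    {Ω : Type*} [mΩ : MeasurableSpace Ω] [StandardBorelSpace Ω]
    (P : Measure Ω) [IsProbabilityMeasure P]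
    {k : ℕ} (X : Ω → (Fin k → ℝ)) (Y1 Y0 D R : Ω → ℝ)
    (hX : Measurable X) (hY1 : Measurable Y1) (hY0 : Measurable Y0)
    (hD : Measurable D) (hR : Measurable R)
    (hDbin : ∀ ω, D ω = 0 ∨ D ω = 1) (hRbin : ∀ ω, R ω = 0 ∨ R ω = 1)
    -- Assumption 2 (MAR): (Y(1), Y(0)) ⟂ R | (X, D)
    (hA2 : CondIndepFun (MeasurableSpace.comap (fun ω => (X ω, D ω)) inferInstance)
      (Measurable.comap_le (hX.prodMk hD))
      (fun ω => (Y1 ω, Y0 ω)) R P)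
    -- nonconformity score V_C = v(X, D, Y(1), Y(0))
    (v : (Fin k → ℝ) × ℝ × ℝ × ℝ → ℝ) (hv : Measurable v)
    (V : Ω → ℝ) (hV : V = fun ω => v (X ω, D ω, Y1 ω, Y0 ω))
    (hpos : 0 < P {ω | R ω = 0})
    -- eR is (a version of) the response propensity P(R = 1 | X, D)
    (eR : (Fin k → ℝ) → ℝ → ℝ) (heRmeas : Measurable fun p : (Fin k → ℝ) × ℝ => eR p.1 p.2)
    (heR : (fun ω => eR (X ω) (D ω)) =ᵐ[P]
      MeasureTheory.condExp (MeasurableSpace.comap (fun ω' => (X ω', D ω')) inferInstance) P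
        (Set.indicator {ω' | R ω' = 1} (fun _ => (1 : ℝ))))
    -- Assumption 3 (overlap) for the response propensity; in particular
    -- 0 < P(R = 1 | X, D) < 1 almost surely
    (hoverlap : ∃ c : ℝ, 0 < c ∧ ∀ᵐ ω ∂P, c < eR (X ω) (D ω) ∧ eR (X ω) (D ω) < 1 - c)
    (γ : ℝ) (hγ : γ ∈ Set.Ioo (0 : ℝ) 1)
    (m : ℝ → (Fin k → ℝ) → ℝ → ℝ)
    (hmmeas : Measurable fun p : ℝ × (Fin k → ℝ) × ℝ => m p.1 p.2.1 p.2.2)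
    (hmbdd : ∀ η x d, m η x d ∈ Set.Icc (0 : ℝ) 1)
    (η : ℝ) :
    (P[|{ω | R ω = 0}] {ω | V ω < η}).toReal =
      1 - γ +
        (∫ ω, ((1 - R ω) * (m η (X ω) (D ω) - (1 - γ)) +
            (R ω / (eR (X ω) (D ω) / (1 - eR (X ω) (D ω)))) *
              ((if V ω < η then (1 : ℝ) else 0) - m η (X ω) (D ω))) ∂P) /
          (P {ω | R ω = 0}).toReal := by
  obtain ⟨c, hc, hae⟩ := hoverlap
  set G : MeasurableSpace Ω := MeasurableSpace.comap (fun ω => (X ω, D ω)) inferInstance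
    with hGdef
  have hG : G ≤ mΩ := Measurable.comap_le (hX.prodMk hD)
  have hXD : Measurable[mΩ] fun ω => (X ω, D ω) := hX.prodMk hD
  have hYY : Measurable[mΩ] fun ω => (Y1 ω, Y0 ω) := hY1.prodMk hY0
  have hXDG : Measurable[G] fun ω => (X ω, D ω) := by
    rw [hGdef]; exact measurable_iff_comap_le.mpr le_rfl
  set R1 : Set Ω := {ω | R ω = 1} with hR1def
  set R0 : Set Ω := {ω | R ω = 0} with hR0def
  have hR1m : MeasurableSet[mΩ] R1 := by
    have : R1 = R ⁻¹' {1} := by ext ω; simp [hR1def]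
    rw [this]; exact hR (measurableSet_singleton 1)
  have hR0m : MeasurableSet[mΩ] R0 := by
    have : R0 = R ⁻¹' {0} := by ext ω; simp [hR0def]
    rw [this]; exact hR (measurableSet_singleton 0)
  -- basic measurability
  have heFG : Measurable[G] fun ω => eR (X ω) (D ω) := heRmeas.comp hXDG
  have heFm : Measurable[mΩ] fun ω => eR (X ω) (D ω) := heRmeas.comp hXD
  have hgG : Measurable[G] fun ω => (1 - eR (X ω) (D ω)) / eR (X ω) (D ω) :=
    (measurable_const.sub heFG).div heFG
  have hgm : Measurable[mΩ] fun ω => (1 - eR (X ω) (D ω)) / eR (X ω) (D ω) :=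
    (measurable_const.sub heFm).div heFm
  have hmFm : Measurable[mΩ] fun ω => m η (X ω) (D ω) :=
    hmmeas.comp (measurable_const.prodMk hXD)
  have hmFG : Measurable[G] fun ω => m η (X ω) (D ω) :=
    hmmeas.comp (measurable_const.prodMk hXDG)
  have hmFbd : ∀ ω, ‖m η (X ω) (D ω)‖ ≤ 1 := fun ω => by
    rw [Real.norm_eq_abs, abs_of_nonneg (hmbdd η _ _).1]; exact (hmbdd η _ _).2
  have hgbd : ∀ᵐ ω ∂P, ‖(1 - eR (X ω) (D ω)) / eR (X ω) (D ω)‖ ≤ 1 / c := by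
    filter_upwards [hae] with ω h
    have h1 : 0 < eR (X ω) (D ω) := lt_trans hc h.1
    have h2 : 0 < 1 - eR (X ω) (D ω) := by nlinarith [h.2]
    rw [Real.norm_eq_abs, abs_of_nonneg (div_nonneg h2.le h1.le)]
    exact div_le_div₀ zero_le_one (by linarith) hc h.1.le
  have hind : ∀ (S : Set Ω), MeasurableSet[mΩ] S →
      Integrable (S.indicator fun _ => (1 : ℝ)) P :=
    fun S hS => aux_int_ind P (integrable_const 1) hS
  have hindbd : ∀ (S : Set Ω) (ω : Ω), ‖S.indicator (fun _ => (1 : ℝ)) ω‖ ≤ 1 := by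
    intro S ω; by_cases h : ω ∈ S <;> simp [Set.indicator_apply, h]
  -- conditional expectation of the R = 0 indicator
  have hR1R0 : ∀ ω, R0.indicator (fun _ => (1 : ℝ)) ω
      = 1 - R1.indicator (fun _ => (1 : ℝ)) ω := by
    intro ω
    rcases hRbin ω with h | h
    · have h0 : ω ∈ R0 := h
      have h1 : ω ∉ R1 := by simp [hR1def, h]
      simp [Set.indicator_of_mem h0, Set.indicator_of_notMem h1]
    · have h0 : ω ∉ R0 := by simp [hR0def, h]
      have h1 : ω ∈ R1 := h
      simp [Set.indicator_of_mem h1, Set.indicator_of_notMem h0]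
  have hcondR0 : P[R0.indicator fun _ => (1 : ℝ)|G]
      =ᵐ[P] fun ω => 1 - eR (X ω) (D ω) := by
    have h1 : R0.indicator (fun _ => (1 : ℝ))
        = (fun _ => (1 : ℝ)) - R1.indicator (fun _ => (1 : ℝ)) := by
      funext ω; simpa using hR1R0 ω
    rw [h1]
    refine (condExp_sub (integrable_const (1 : ℝ)) (hind R1 hR1m) G).trans ?_
    have h3 : P[(fun _ => (1 : ℝ))|G] = fun _ => (1 : ℝ) := condExp_const hG 1
    filter_upwards [heR] with ω hω
    simp [Pi.sub_apply, h3, ← hω]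
  -- conditional independence, specialized
  have hA2' := (condIndepFun_iff_condExp_inter_preimage_eq_mul
    (hY1.prodMk hY0) hR).mp hA2
  have hR1preim : R ⁻¹' {1} = R1 := by ext ω; simp [hR1def]
  have hR0preim : R ⁻¹' {0} = R0 := by ext ω; simp [hR0def]
  have hA2R1 : ∀ s₂ : Set (ℝ × ℝ), MeasurableSet s₂ →
      P[(((fun ω => (Y1 ω, Y0 ω)) ⁻¹' s₂) ∩ R1).indicator fun _ => (1 : ℝ)|G] =ᵐ[P]
        fun ω => (P[((fun ω => (Y1 ω, Y0 ω)) ⁻¹' s₂).indicator fun _ => (1 : ℝ)|G]) ω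
          * eR (X ω) (D ω) := by
    intro s₂ hs₂
    have h := hA2' s₂ {1} hs₂ (measurableSet_singleton 1)
    rw [hR1preim] at h
    refine h.trans ?_
    filter_upwards [heR] with ω hω
    rw [← hω]
  have hA2R0 : ∀ s₂ : Set (ℝ × ℝ), MeasurableSet s₂ →
      P[(((fun ω => (Y1 ω, Y0 ω)) ⁻¹' s₂) ∩ R0).indicator fun _ => (1 : ℝ)|G] =ᵐ[P]
        fun ω => (P[((fun ω => (Y1 ω, Y0 ω)) ⁻¹' s₂).indicator fun _ => (1 : ℝ)|G]) ω
          * (1 - eR (X ω) (D ω)) := by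
    intro s₂ hs₂
    have h := hA2' s₂ {0} hs₂ (measurableSet_singleton 0)
    rw [hR0preim] at h
    refine h.trans ?_
    filter_upwards [hcondR0] with ω hω
    rw [hω]
  -- key rectangle identity
  have key : ∀ s₁ : Set ((Fin k → ℝ) × ℝ), MeasurableSet s₁ →
      ∀ s₂ : Set (ℝ × ℝ), MeasurableSet s₂ →
      ∫ ω, (((fun ω' => (X ω', D ω')) ⁻¹' s₁).indicator (fun _ => (1 : ℝ)) ω
            * ((1 - eR (X ω) (D ω)) / eR (X ω) (D ω)))
          * ((((fun ω' => (Y1 ω', Y0 ω')) ⁻¹' s₂) ∩ R1).indicator (fun _ => (1 : ℝ)) ω) ∂P =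
      ∫ ω, ((fun ω' => (X ω', D ω')) ⁻¹' s₁).indicator (fun _ => (1 : ℝ)) ω
          * ((((fun ω' => (Y1 ω', Y0 ω')) ⁻¹' s₂) ∩ R0).indicator (fun _ => (1 : ℝ)) ω) ∂P := by
    intro s₁ hs₁ s₂ hs₂
    have hSpG : MeasurableSet[G] ((fun ω' => (X ω', D ω')) ⁻¹' s₁) := by
      rw [hGdef]; exact ⟨s₁, hs₁, rfl⟩
    have hB : MeasurableSet[mΩ] ((fun ω' => (Y1 ω', Y0 ω')) ⁻¹' s₂) := hYY hs₂
    have hφ₁ : StronglyMeasurable[G] fun ω =>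
        ((fun ω' => (X ω', D ω')) ⁻¹' s₁).indicator (fun _ => (1 : ℝ)) ω
          * ((1 - eR (X ω) (D ω)) / eR (X ω) (D ω)) :=
      (stronglyMeasurable_const.indicator hSpG).mul hgG.stronglyMeasurable
    have hφ₁bd : ∀ᵐ ω ∂P, ‖((fun ω' => (X ω', D ω')) ⁻¹' s₁).indicator (fun _ => (1 : ℝ)) ω
        * ((1 - eR (X ω) (D ω)) / eR (X ω) (D ω))‖ ≤ 1 / c := by
      filter_upwards [hgbd] with ω h
      rw [norm_mul]
      calc ‖((fun ω' => (X ω', D ω')) ⁻¹' s₁).indicator (fun _ => (1 : ℝ)) ω‖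
            * ‖(1 - eR (X ω) (D ω)) / eR (X ω) (D ω)‖
          ≤ 1 * (1 / c) := mul_le_mul (hindbd _ _) h (norm_nonneg _) zero_le_one
        _ = 1 / c := one_mul _
    have hφ₂ : StronglyMeasurable[G]
        (((fun ω' => (X ω', D ω')) ⁻¹' s₁).indicator (fun _ => (1 : ℝ))) :=
      stronglyMeasurable_const.indicator hSpG
    have e1 : ∫ ω, (((fun ω' => (X ω', D ω')) ⁻¹' s₁).indicator (fun _ => (1 : ℝ)) ω
            * ((1 - eR (X ω) (D ω)) / eR (X ω) (D ω)))
          * ((((fun ω' => (Y1 ω', Y0 ω')) ⁻¹' s₂) ∩ R1).indicator (fun _ => (1 : ℝ)) ω) ∂P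
        = ∫ ω, (((fun ω' => (X ω', D ω')) ⁻¹' s₁).indicator (fun _ => (1 : ℝ)) ω
            * ((1 - eR (X ω) (D ω)) / eR (X ω) (D ω)))
          * (P[(((fun ω' => (Y1 ω', Y0 ω')) ⁻¹' s₂) ∩ R1).indicator fun _ => (1 : ℝ)|G]) ω ∂P :=
      pullout_aux hG P hφ₁ hφ₁bd (hind _ (hB.inter hR1m))
    have e2 : ∫ ω, ((fun ω' => (X ω', D ω')) ⁻¹' s₁).indicator (fun _ => (1 : ℝ)) ω
          * ((((fun ω' => (Y1 ω', Y0 ω')) ⁻¹' s₂) ∩ R0).indicator (fun _ => (1 : ℝ)) ω) ∂P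
        = ∫ ω, ((fun ω' => (X ω', D ω')) ⁻¹' s₁).indicator (fun _ => (1 : ℝ)) ω
          * (P[(((fun ω' => (Y1 ω', Y0 ω')) ⁻¹' s₂) ∩ R0).indicator fun _ => (1 : ℝ)|G]) ω ∂P :=
      pullout_aux hG P hφ₂ (Filter.Eventually.of_forall (hindbd _)) (hind _ (hB.inter hR0m))
    rw [e1, e2]
    have l1 : (fun ω => (((fun ω' => (X ω', D ω')) ⁻¹' s₁).indicator (fun _ => (1 : ℝ)) ω
            * ((1 - eR (X ω) (D ω)) / eR (X ω) (D ω)))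
          * (P[(((fun ω' => (Y1 ω', Y0 ω')) ⁻¹' s₂) ∩ R1).indicator fun _ => (1 : ℝ)|G]) ω)
        =ᵐ[P] fun ω => ((fun ω' => (X ω', D ω')) ⁻¹' s₁).indicator (fun _ => (1 : ℝ)) ω
          * ((1 - eR (X ω) (D ω))
            * (P[((fun ω' => (Y1 ω', Y0 ω')) ⁻¹' s₂).indicator fun _ => (1 : ℝ)|G]) ω) := by
      filter_upwards [hA2R1 s₂ hs₂, hae] with ω h₁ h₂
      rw [h₁]
      have he0 : eR (X ω) (D ω) ≠ 0 := (lt_trans hc h₂.1).ne'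
      have hge : (1 - eR (X ω) (D ω)) / eR (X ω) (D ω) * eR (X ω) (D ω)
          = 1 - eR (X ω) (D ω) := div_mul_cancel₀ _ he0
      linear_combination (((fun ω' => (X ω', D ω')) ⁻¹' s₁).indicator (fun _ => (1 : ℝ)) ω
        * (P[((fun ω' => (Y1 ω', Y0 ω')) ⁻¹' s₂).indicator fun _ => (1 : ℝ)|G]) ω) * hge
    have l2 : (fun ω => ((fun ω' => (X ω', D ω')) ⁻¹' s₁).indicator (fun _ => (1 : ℝ)) ω
          * (P[(((fun ω' => (Y1 ω', Y0 ω')) ⁻¹' s₂) ∩ R0).indicator fun _ => (1 : ℝ)|G]) ω)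
        =ᵐ[P] fun ω => ((fun ω' => (X ω', D ω')) ⁻¹' s₁).indicator (fun _ => (1 : ℝ)) ω
          * ((1 - eR (X ω) (D ω))
            * (P[((fun ω' => (Y1 ω', Y0 ω')) ⁻¹' s₂).indicator fun _ => (1 : ℝ)|G]) ω) := by
      filter_upwards [hA2R0 s₂ hs₂] with ω h₁
      rw [h₁]; ring
    rw [integral_congr_ae l1, integral_congr_ae l2]
  -- the measure identity
  set A : Set Ω := {ω | V ω < η} with hAdef
  have hVm : Measurable[mΩ] V := by rw [hV]; exact hv.comp (hX.prodMk (hD.prodMk hYY))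
  have hAm : MeasurableSet[mΩ] A := hVm measurableSet_Iio
  set F₁ : Ω → ℝ := fun ω => ((1 - eR (X ω) (D ω)) / eR (X ω) (D ω))
      * R1.indicator (fun _ => (1 : ℝ)) ω with hF₁def
  set F₂ : Ω → ℝ := fun ω => R0.indicator (fun _ => (1 : ℝ)) ω with hF₂def
  have hF₁m : Measurable[mΩ] F₁ := hgm.mul (measurable_const.indicator hR1m)
  have hF₂m : Measurable[mΩ] F₂ := measurable_const.indicator hR0m
  have hF₁int : Integrable F₁ P :=
    (hind R1 hR1m).bdd_mul (Measurable.aestronglyMeasurable (μ := P) hgm) hgbd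
  have hF₂int : Integrable F₂ P := hind R0 hR0m
  have hF₁nn : 0 ≤ᵐ[P] F₁ := by
    filter_upwards [hae] with ω h
    have h1 : 0 < eR (X ω) (D ω) := lt_trans hc h.1
    have h2 : 0 < 1 - eR (X ω) (D ω) := by nlinarith [h.2]
    have : (0:ℝ) ≤ R1.indicator (fun _ => (1 : ℝ)) ω := by
      by_cases hh : ω ∈ R1 <;> simp [Set.indicator_apply, hh]
    exact mul_nonneg (div_nonneg h2.le h1.le) this
  have hF₂nn : 0 ≤ᵐ[P] F₂ := Filter.Eventually.of_forall fun ω => by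
    by_cases hh : ω ∈ R0 <;> simp [hF₂def, Set.indicator_apply, hh]
  set W : Ω → ((Fin k → ℝ) × ℝ) × ℝ × ℝ := fun ω => ((X ω, D ω), (Y1 ω, Y0 ω)) with hWdef
  have hWm : Measurable[mΩ] W := hXD.prodMk hYY
  haveI hfinρ₁ : IsFiniteMeasure (P.withDensity fun ω => ENNReal.ofReal (F₁ ω)) := by
    constructor
    rw [aux_bridge P F₁ hF₁int hF₁nn MeasurableSet.univ]
    exact ENNReal.ofReal_lt_top
  haveI hfinμ₁ : IsFiniteMeasure
      (mapm (P.withDensity fun ω => ENNReal.ofReal (F₁ ω)) W) := by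
    constructor
    rw [mapm_apply hWm MeasurableSet.univ]
    exact measure_lt_top _ _
  have hrect : ∀ s₁ : Set ((Fin k → ℝ) × ℝ), MeasurableSet s₁ →
      ∀ s₂ : Set (ℝ × ℝ), MeasurableSet s₂ →
      mapm (P.withDensity fun ω => ENNReal.ofReal (F₁ ω)) W (s₁ ×ˢ s₂)
        = mapm (P.withDensity fun ω => ENNReal.ofReal (F₂ ω)) W (s₁ ×ˢ s₂) := by
    intro s₁ hs₁ s₂ hs₂
    have hprod : MeasurableSet (s₁ ×ˢ s₂) := hs₁.prod hs₂
    have hpre : W ⁻¹' (s₁ ×ˢ s₂)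
        = ((fun ω' => (X ω', D ω')) ⁻¹' s₁) ∩ ((fun ω' => (Y1 ω', Y0 ω')) ⁻¹' s₂) := rfl
    rw [mapm_apply hWm hprod, mapm_apply hWm hprod,
      aux_bridge P F₁ hF₁int hF₁nn (hWm hprod), aux_bridge P F₂ hF₂int hF₂nn (hWm hprod)]
    congr 1
    have ptw1 : ∀ ω, (W ⁻¹' (s₁ ×ˢ s₂)).indicator F₁ ω
        = (((fun ω' => (X ω', D ω')) ⁻¹' s₁).indicator (fun _ => (1 : ℝ)) ω
            * ((1 - eR (X ω) (D ω)) / eR (X ω) (D ω)))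
          * ((((fun ω' => (Y1 ω', Y0 ω')) ⁻¹' s₂) ∩ R1).indicator (fun _ => (1 : ℝ)) ω) := by
      intro ω
      rw [hpre]
      by_cases h₁ : ω ∈ (fun ω' => (X ω', D ω')) ⁻¹' s₁ <;>
        by_cases h₂ : ω ∈ (fun ω' => (Y1 ω', Y0 ω')) ⁻¹' s₂ <;>
        by_cases h₃ : ω ∈ R1 <;>
        simp [hF₁def, Set.indicator_apply, h₁, h₂, h₃, Set.mem_inter_iff]
    have ptw2 : ∀ ω, (W ⁻¹' (s₁ ×ˢ s₂)).indicator F₂ ω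
        = ((fun ω' => (X ω', D ω')) ⁻¹' s₁).indicator (fun _ => (1 : ℝ)) ω
          * ((((fun ω' => (Y1 ω', Y0 ω')) ⁻¹' s₂) ∩ R0).indicator (fun _ => (1 : ℝ)) ω) := by
      intro ω
      rw [hpre]
      by_cases h₁ : ω ∈ (fun ω' => (X ω', D ω')) ⁻¹' s₁ <;>
        by_cases h₂ : ω ∈ (fun ω' => (Y1 ω', Y0 ω')) ⁻¹' s₂ <;>
        by_cases h₃ : ω ∈ R0 <;>
        simp [hF₂def, Set.indicator_apply, h₁, h₂, h₃, Set.mem_inter_iff]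
    rw [integral_congr_ae (Filter.Eventually.of_forall ptw1),
      integral_congr_ae (Filter.Eventually.of_forall ptw2)]
    exact key s₁ hs₁ s₂ hs₂
  have hμeq : mapm (P.withDensity fun ω => ENNReal.ofReal (F₁ ω)) W
      = mapm (P.withDensity fun ω => ENNReal.ofReal (F₂ ω)) W := by
    refine ext_of_generate_finite _ generateFrom_prod.symm isPiSystem_prod ?_ ?_
    · rintro s ⟨s₁, hs₁, s₂, hs₂, rfl⟩
      exact hrect s₁ hs₁ s₂ hs₂
    · rw [← Set.univ_prod_univ]
      exact hrect _ MeasurableSet.univ _ MeasurableSet.univ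
  -- evaluate on the score event
  have hmap : Measurable fun p : ((Fin k → ℝ) × ℝ) × ℝ × ℝ => (p.1.1, p.1.2, p.2.1, p.2.2) :=
    (measurable_fst.fst).prodMk
      ((measurable_fst.snd).prodMk ((measurable_snd.fst).prodMk measurable_snd.snd))
  have hs₀m : MeasurableSet {p : ((Fin k → ℝ) × ℝ) × ℝ × ℝ
      | v (p.1.1, p.1.2, p.2.1, p.2.2) < η} :=
    (hv.comp hmap) measurableSet_Iio
  have hWs₀ : W ⁻¹' {p : ((Fin k → ℝ) × ℝ) × ℝ × ℝ | v (p.1.1, p.1.2, p.2.1, p.2.2) < η}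
      = A := by
    ext ω; simp [hWdef, hAdef, hV]
  have hμs₀' : mapm (P.withDensity fun ω => ENNReal.ofReal (F₁ ω)) W
        {p : ((Fin k → ℝ) × ℝ) × ℝ × ℝ | v (p.1.1, p.1.2, p.2.1, p.2.2) < η}
      = mapm (P.withDensity fun ω => ENNReal.ofReal (F₂ ω)) W
        {p : ((Fin k → ℝ) × ℝ) × ℝ × ℝ | v (p.1.1, p.1.2, p.2.1, p.2.2) < η} := by
    rw [hμeq]
  rw [mapm_apply hWm hs₀m, mapm_apply hWm hs₀m, hWs₀,
    aux_bridge P F₁ hF₁int hF₁nn hAm, aux_bridge P F₂ hF₂int hF₂nn hAm] at hμs₀'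
  have hstar : ∫ ω, A.indicator F₁ ω ∂P = ∫ ω, A.indicator F₂ ω ∂P := by
    have n1 : 0 ≤ ∫ ω, A.indicator F₁ ω ∂P := by
      refine integral_nonneg_of_ae ?_
      filter_upwards [hF₁nn] with ω h
      exact Set.indicator_apply_nonneg fun _ => h
    have n2 : 0 ≤ ∫ ω, A.indicator F₂ ω ∂P := by
      refine integral_nonneg_of_ae ?_
      filter_upwards [hF₂nn] with ω h
      exact Set.indicator_apply_nonneg fun _ => h
    exact (ENNReal.ofReal_eq_ofReal_iff n1 n2).mp hμs₀'
  -- pointwise decomposition of the integrand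
  have hψ : ∀ ω, (1 - R ω) * (m η (X ω) (D ω) - (1 - γ)) +
      (R ω / (eR (X ω) (D ω) / (1 - eR (X ω) (D ω)))) *
        ((if V ω < η then (1 : ℝ) else 0) - m η (X ω) (D ω))
      = (m η (X ω) (D ω) * R0.indicator (fun _ => (1 : ℝ)) ω
          - (1 - γ) * R0.indicator (fun _ => (1 : ℝ)) ω)
        + (A.indicator F₁ ω
          - (((1 - eR (X ω) (D ω)) / eR (X ω) (D ω)) * m η (X ω) (D ω))
            * R1.indicator (fun _ => (1 : ℝ)) ω) := by
    intro ω
    rw [div_div_eq_mul_div]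
    rcases hRbin ω with h | h
    · have h0 : ω ∈ R0 := h
      have h1 : ω ∉ R1 := by simp [hR1def, h]
      have hF₁ω : F₁ ω = 0 := by simp [hF₁def, Set.indicator_of_notMem h1]
      rw [h]
      by_cases hA' : ω ∈ A <;>
        simp [Set.indicator_apply, h0, h1, hA', hF₁ω] <;> ring
    · have h1 : ω ∈ R1 := h
      have h0 : ω ∉ R0 := by simp [hR0def, h]
      rw [h]
      by_cases hA' : V ω < η
      · have hA'' : ω ∈ A := hA'
        simp only [Set.indicator_of_mem h1, Set.indicator_of_mem hA'',
          Set.indicator_of_notMem h0, hF₁def, if_pos hA']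
        ring
      · have hA'' : ω ∉ A := hA'
        simp only [Set.indicator_of_mem h1, Set.indicator_of_notMem hA'',
          Set.indicator_of_notMem h0, if_neg hA']
        ring
  -- integrability of the pieces
  have int1 : Integrable (fun ω => m η (X ω) (D ω) * R0.indicator (fun _ => (1 : ℝ)) ω) P :=
    (hind R0 hR0m).bdd_mul (Measurable.aestronglyMeasurable (μ := P) hmFm) (Filter.Eventually.of_forall hmFbd)
  have int2 : Integrable (fun ω => (1 - γ) * R0.indicator (fun _ => (1 : ℝ)) ω) P :=
    (hind R0 hR0m).const_mul (1 - γ)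
  have int3 : Integrable (fun ω => A.indicator F₁ ω) P := aux_int_ind P hF₁int hAm
  have bd4 : ∀ᵐ ω ∂P, ‖((1 - eR (X ω) (D ω)) / eR (X ω) (D ω)) * m η (X ω) (D ω)‖ ≤ 1 / c := by
    filter_upwards [hgbd] with ω hg
    rw [norm_mul]
    calc ‖(1 - eR (X ω) (D ω)) / eR (X ω) (D ω)‖ * ‖m η (X ω) (D ω)‖
        ≤ (1 / c) * 1 := mul_le_mul hg (hmFbd ω) (norm_nonneg _) (by positivity)
      _ = 1 / c := mul_one _
  have int4 : Integrable (fun ω =>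
      (((1 - eR (X ω) (D ω)) / eR (X ω) (D ω)) * m η (X ω) (D ω))
        * R1.indicator (fun _ => (1 : ℝ)) ω) P :=
    (hind R1 hR1m).bdd_mul (Measurable.aestronglyMeasurable (μ := P) (hgm.mul hmFm)) bd4
  -- split the integral
  have hsplit : (∫ ω, ((1 - R ω) * (m η (X ω) (D ω) - (1 - γ)) +
        (R ω / (eR (X ω) (D ω) / (1 - eR (X ω) (D ω)))) *
          ((if V ω < η then (1 : ℝ) else 0) - m η (X ω) (D ω))) ∂P)
      = ((∫ ω, m η (X ω) (D ω) * R0.indicator (fun _ => (1 : ℝ)) ω ∂P)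
          - (1 - γ) * ∫ ω, R0.indicator (fun _ => (1 : ℝ)) ω ∂P)
        + ((∫ ω, A.indicator F₁ ω ∂P)
          - ∫ ω, (((1 - eR (X ω) (D ω)) / eR (X ω) (D ω)) * m η (X ω) (D ω))
              * R1.indicator (fun _ => (1 : ℝ)) ω ∂P) := by
    rw [integral_congr_ae (Filter.Eventually.of_forall hψ)]
    have e1 : ∫ ω, ((m η (X ω) (D ω) * R0.indicator (fun _ => (1 : ℝ)) ω
            - (1 - γ) * R0.indicator (fun _ => (1 : ℝ)) ω)
          + (A.indicator F₁ ω
            - (((1 - eR (X ω) (D ω)) / eR (X ω) (D ω)) * m η (X ω) (D ω))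
              * R1.indicator (fun _ => (1 : ℝ)) ω)) ∂P
        = (∫ ω, (m η (X ω) (D ω) * R0.indicator (fun _ => (1 : ℝ)) ω
            - (1 - γ) * R0.indicator (fun _ => (1 : ℝ)) ω) ∂P)
          + ∫ ω, (A.indicator F₁ ω
            - (((1 - eR (X ω) (D ω)) / eR (X ω) (D ω)) * m η (X ω) (D ω))
              * R1.indicator (fun _ => (1 : ℝ)) ω) ∂P :=
      integral_add (int1.sub int2) (int3.sub int4)
    have e2 : ∫ ω, (m η (X ω) (D ω) * R0.indicator (fun _ => (1 : ℝ)) ω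
          - (1 - γ) * R0.indicator (fun _ => (1 : ℝ)) ω) ∂P
        = (∫ ω, m η (X ω) (D ω) * R0.indicator (fun _ => (1 : ℝ)) ω ∂P)
          - ∫ ω, (1 - γ) * R0.indicator (fun _ => (1 : ℝ)) ω ∂P :=
      integral_sub int1 int2
    have e3 : ∫ ω, (A.indicator F₁ ω
          - (((1 - eR (X ω) (D ω)) / eR (X ω) (D ω)) * m η (X ω) (D ω))
            * R1.indicator (fun _ => (1 : ℝ)) ω) ∂P
        = (∫ ω, A.indicator F₁ ω ∂P)
          - ∫ ω, (((1 - eR (X ω) (D ω)) / eR (X ω) (D ω)) * m η (X ω) (D ω))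
              * R1.indicator (fun _ => (1 : ℝ)) ω ∂P :=
      integral_sub int3 int4
    have e4 : ∫ ω, (1 - γ) * R0.indicator (fun _ => (1 : ℝ)) ω ∂P
        = (1 - γ) * ∫ ω, R0.indicator (fun _ => (1 : ℝ)) ω ∂P :=
      integral_const_mul _ _
    rw [e1, e2, e3, e4]
  -- evaluate the pieces
  have ev1 : ∫ ω, m η (X ω) (D ω) * R0.indicator (fun _ => (1 : ℝ)) ω ∂P
      = ∫ ω, m η (X ω) (D ω) * (1 - eR (X ω) (D ω)) ∂P := by
    have e : ∫ ω, m η (X ω) (D ω) * R0.indicator (fun _ => (1 : ℝ)) ω ∂P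
        = ∫ ω, m η (X ω) (D ω) * (P[R0.indicator fun _ => (1 : ℝ)|G]) ω ∂P :=
      pullout_aux hG P hmFG.stronglyMeasurable
        (Filter.Eventually.of_forall hmFbd) (hind R0 hR0m)
    rw [e]
    refine integral_congr_ae ?_
    filter_upwards [hcondR0] with ω hω
    rw [hω]
  have ev4 : ∫ ω, (((1 - eR (X ω) (D ω)) / eR (X ω) (D ω)) * m η (X ω) (D ω))
        * R1.indicator (fun _ => (1 : ℝ)) ω ∂P
      = ∫ ω, m η (X ω) (D ω) * (1 - eR (X ω) (D ω)) ∂P := by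
    have e : ∫ ω, (((1 - eR (X ω) (D ω)) / eR (X ω) (D ω)) * m η (X ω) (D ω))
          * R1.indicator (fun _ => (1 : ℝ)) ω ∂P
        = ∫ ω, (((1 - eR (X ω) (D ω)) / eR (X ω) (D ω)) * m η (X ω) (D ω))
          * (P[R1.indicator fun _ => (1 : ℝ)|G]) ω ∂P :=
      pullout_aux hG P (hgG.stronglyMeasurable.mul hmFG.stronglyMeasurable)
        bd4 (hind R1 hR1m)
    rw [e]
    refine integral_congr_ae ?_
    filter_upwards [heR, hae] with ω h₁ h₂
    have he0 : eR (X ω) (D ω) ≠ 0 := (lt_trans hc h₂.1).ne'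
    have hge : (1 - eR (X ω) (D ω)) / eR (X ω) (D ω) * eR (X ω) (D ω)
        = 1 - eR (X ω) (D ω) := div_mul_cancel₀ _ he0
    rw [← h₁]
    linear_combination m η (X ω) (D ω) * hge
  have ev2 : ∫ ω, R0.indicator (fun _ => (1 : ℝ)) ω ∂P = (P R0).toReal :=
    aux_integral_ind_one P hR0m
  have ev3 : ∫ ω, A.indicator F₂ ω ∂P = (P (A ∩ R0)).toReal := by
    have h : ∀ ω, A.indicator F₂ ω = (A ∩ R0).indicator (fun _ => (1 : ℝ)) ω := by
      intro ω
      by_cases h₁ : ω ∈ A <;> by_cases h₂ : ω ∈ R0 <;>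
        simp [hF₂def, Set.indicator_apply, h₁, h₂, Set.mem_inter_iff]
    rw [integral_congr_ae (Filter.Eventually.of_forall h)]
    exact aux_integral_ind_one P (hAm.inter hR0m)
  -- put everything together
  have hbig : (∫ ω, ((1 - R ω) * (m η (X ω) (D ω) - (1 - γ)) +
        (R ω / (eR (X ω) (D ω) / (1 - eR (X ω) (D ω)))) *
          ((if V ω < η then (1 : ℝ) else 0) - m η (X ω) (D ω))) ∂P)
      = (P (A ∩ R0)).toReal - (1 - γ) * (P R0).toReal := by
    rw [hsplit, ev1, ev2, ev4, hstar, ev3]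
    ring
  rw [hbig, cond_apply hR0m]
  rw [ENNReal.toReal_mul, ENNReal.toReal_inv, Set.inter_comm R0 A]
  have hr : (P R0).toReal ≠ 0 :=
    (ENNReal.toReal_pos hpos.ne' (measure_ne_top P _)).ne'
  field_simp
  ring
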